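/- Let ρ : (0,∞) → ℝ be differentiable with derivative w = ρ', and let x_1, ..., x_N ∈ ℝ^D be nonzero. If a positive definite symmetric matrix Σ ∈ ℝ^{D×D} is a local minimizer of the energy F(Σ) = (1/2N) ∑_{i=1}^N ρ(x_iᵀ Σ^{−1} x_i) + (1/2) log det(Σ) over the open set of positive definite symmetric D×D matrices, then Σ satisfies the fixed-point equation (1/N) ∑_{i=1}^N w(x_iᵀ Σ^{−1} x_i) x_i x_iᵀ = Σ. -/

import Mathlib

open Matrix Finset Filter Topology

attribute [local instance] Matrix.linftyOpNormedRing Matrix.linftyOpNormedAlgebra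

section Aux
variable {n : Type*} [Fintype n] [DecidableEq n]

private lemma aux_hasDerivAt_det_line (S H : Matrix n n ℝ) :
    HasDerivAt (fun t : ℝ => (S + t • H).det) ((S.adjugate * H).trace) 0 := by
  have e : (fun t : ℝ => (S + t • H).det)
      = fun t : ℝ => ∑ σ : Equiv.Perm n,
          ((Equiv.Perm.sign σ : ℤ) : ℝ) * ∏ i, (S (σ i) i + t * H (σ i) i) := by
    funext t
    simp [Matrix.det_apply, Matrix.add_apply, Matrix.smul_apply, smul_eq_mul,
      Units.smul_def, zsmul_eq_mul]
  rw [e]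
  have hp : ∀ σ : Equiv.Perm n,
      HasDerivAt (fun t : ℝ => ∏ i, (S (σ i) i + t * H (σ i) i))
        (∑ i, (∏ j ∈ univ.erase i, S (σ j) j) * H (σ i) i) 0 := by
    intro σ
    have := HasDerivAt.fun_finsetProd (u := univ)
      (f := fun i (t : ℝ) => S (σ i) i + t * H (σ i) i)
      (f' := fun i => H (σ i) i) (x := (0:ℝ))
      (fun i _ => (hasDerivAt_mul_const (H (σ i) i)).const_add (S (σ i) i))
    simpa using this
  have hsum : HasDerivAt
      (fun t : ℝ => ∑ σ : Equiv.Perm n,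
        ((Equiv.Perm.sign σ : ℤ) : ℝ) * ∏ i, (S (σ i) i + t * H (σ i) i))
      (∑ σ : Equiv.Perm n, ((Equiv.Perm.sign σ : ℤ) : ℝ) *
        ∑ i, (∏ j ∈ univ.erase i, S (σ j) j) * H (σ i) i) 0 :=
    HasDerivAt.fun_sum (fun σ _ => (hp σ).const_mul _)
  convert hsum using 1
  have key : ∀ i : n, (S.updateCol i fun r => H r i).det
      = ∑ σ : Equiv.Perm n, ((Equiv.Perm.sign σ : ℤ) : ℝ) *
          ((∏ j ∈ univ.erase i, S (σ j) j) * H (σ i) i) := by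
    intro i
    rw [Matrix.det_apply]
    refine Finset.sum_congr rfl fun σ _ => ?_
    rw [← Finset.mul_prod_erase univ _ (mem_univ i)]
    have : ∀ j ∈ univ.erase i, (S.updateCol i fun r => H r i) (σ j) j = S (σ j) j := by
      intro j hj
      rw [Matrix.updateCol_apply, if_neg (Finset.ne_of_mem_erase hj)]
    rw [Finset.prod_congr rfl this, Matrix.updateCol_apply, if_pos rfl]
    simp [Units.smul_def, zsmul_eq_mul]
    ring
  have tr : (S.adjugate * H).trace = ∑ i : n, (S.updateCol i fun r => H r i).det := by
    have : ∀ i : n, (S.adjugate * H) i i = (S.updateCol i fun r => H r i).det := by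
      intro i
      have h := congrFun (Matrix.cramer_eq_adjugate_mulVec S (fun r => H r i)) i
      rw [Matrix.cramer_apply] at h
      rw [h]
      simp [Matrix.mulVec, Matrix.mul_apply, dotProduct]
    simp [Matrix.trace, Matrix.diag, this]
  rw [tr]
  simp_rw [key, Finset.mul_sum]
  exact Finset.sum_comm

end Aux

private lemma aux_quad_smul {D : ℕ} (M : Matrix (Fin D) (Fin D) ℝ) (a : ℝ) (v : Fin D → ℝ) :
    (a • v) ⬝ᵥ M *ᵥ (a • v) = a * (a * (v ⬝ᵥ M *ᵥ v)) := by
  rw [Matrix.mulVec_smul, smul_dotProduct, dotProduct_smul]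
  simp [smul_eq_mul, mul_assoc]

private lemma aux_quad_continuous {D : ℕ} (M : Matrix (Fin D) (Fin D) ℝ) :
    Continuous fun v : Fin D → ℝ => v ⬝ᵥ M *ᵥ v := by
  simp only [dotProduct, Matrix.mulVec]
  fun_prop

private lemma aux_eventually_posDef_line {D : ℕ} {S H : Matrix (Fin D) (Fin D) ℝ}
    (hS : S.PosDef) (hH : H.IsHermitian) :
    ∀ᶠ t : ℝ in 𝓝 0, (S + t • H).PosDef := by
  have herm : ∀ t : ℝ, (S + t • H).IsHermitian := by
    intro t
    unfold Matrix.IsHermitian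
    rw [conjTranspose_add, conjTranspose_smul, hS.1, hH]
    simp
  cases isEmpty_or_nonempty (Fin D) with
  | inl h =>
    exact Filter.Eventually.of_forall fun t =>
      ⟨herm t, fun v hv => absurd (Subsingleton.elim v 0) hv⟩
  | inr h =>
    have hcs : IsCompact (Metric.sphere (0 : Fin D → ℝ) 1) := isCompact_sphere _ _
    have hne : (Metric.sphere (0 : Fin D → ℝ) 1).Nonempty :=
      NormedSpace.sphere_nonempty.mpr zero_le_one
    obtain ⟨u₀, hu₀, hcmin⟩ := hcs.exists_isMinOn hne ((aux_quad_continuous S).continuousOn)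
    set c := u₀ ⬝ᵥ S *ᵥ u₀ with hc
    have hcpos : 0 < c := by
      have hu₀ne : u₀ ≠ 0 := by
        intro h0
        rw [Metric.mem_sphere, h0, dist_zero_left] at hu₀
        simp at hu₀
      simpa [star_trivial] using hS.dotProduct_mulVec_pos hu₀ne
    obtain ⟨u₁, hu₁, hcmax⟩ := hcs.exists_isMaxOn hne
      (((aux_quad_continuous H).abs).continuousOn)
    set B := |u₁ ⬝ᵥ H *ᵥ u₁| with hB
    have hBnonneg : 0 ≤ B := abs_nonneg _
    have hεpos : 0 < c / (B + 1) := div_pos hcpos (by linarith)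
    filter_upwards [Metric.ball_mem_nhds (0:ℝ) hεpos] with t ht
    rw [Metric.mem_ball, Real.dist_eq, sub_zero] at ht
    refine Matrix.PosDef.of_dotProduct_mulVec_pos (herm t) fun v hv => ?_
    have hvn : 0 < ‖v‖ := norm_pos_iff.mpr hv
    set u : Fin D → ℝ := ‖v‖⁻¹ • v with hu
    have husphere : u ∈ Metric.sphere (0 : Fin D → ℝ) 1 := by
      simp [hu, norm_smul, abs_of_nonneg (inv_nonneg.mpr hvn.le),
        inv_mul_cancel₀ hvn.ne']
    have hvu : v = ‖v‖ • u := by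
      rw [hu, smul_smul, mul_inv_cancel₀ hvn.ne', one_smul]
    have hpos : 0 < u ⬝ᵥ (S + t • H) *ᵥ u := by
      have e : u ⬝ᵥ (S + t • H) *ᵥ u = u ⬝ᵥ S *ᵥ u + t * (u ⬝ᵥ H *ᵥ u) := by
        rw [Matrix.add_mulVec, dotProduct_add, Matrix.smul_mulVec, dotProduct_smul]
        simp [smul_eq_mul]
      rw [e]
      have h1 : c ≤ u ⬝ᵥ S *ᵥ u := hcmin husphere
      have h2 : |u ⬝ᵥ H *ᵥ u| ≤ B := hcmax husphere
      have h3 : |t * (u ⬝ᵥ H *ᵥ u)| ≤ |t| * B := by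
        rw [abs_mul]
        exact mul_le_mul_of_nonneg_left h2 (abs_nonneg t)
      have h4 : |t| * B < c := by
        calc |t| * B ≤ |t| * (B + 1) := by nlinarith [abs_nonneg t]
        _ < c / (B + 1) * (B + 1) := by
            apply mul_lt_mul_of_pos_right ht; linarith
        _ = c := by field_simp
      have := neg_abs_le (t * (u ⬝ᵥ H *ᵥ u))
      linarith
    have : 0 < v ⬝ᵥ (S + t • H) *ᵥ v := by
      rw [hvu, aux_quad_smul]
      positivity
    simpa [star_trivial] using this

private lemma aux_dot_eq_trace {D : ℕ} (M : Matrix (Fin D) (Fin D) ℝ) (v : Fin D → ℝ) :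
    v ⬝ᵥ M *ᵥ v = (M * vecMulVec v v).trace := by
  simp only [Matrix.trace, Matrix.diag_apply, Matrix.mul_apply, Matrix.vecMulVec_apply,
    dotProduct, Matrix.mulVec]
  simp_rw [Finset.mul_sum]
  exact Finset.sum_congr rfl fun i _ => Finset.sum_congr rfl fun j _ => by ring

/-- Let `ρ : (0,∞) → ℝ` be differentiable with derivative `w = ρ'`, and
let `x 1, …, x N ∈ ℝ^D` be nonzero. If a positive definite symmetric `Σ` is a local
minimizer of `F(Σ) = (1/2N) ∑ ρ(x iᵀ Σ⁻¹ x i) + (1/2) log det Σ` over the open set of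
positive definite symmetric matrices, then it satisfies the fixed-point equation
`(1/N) ∑ w(x iᵀ Σ⁻¹ x i) x i x iᵀ = Σ`. -/
theorem maronna_first_order_condition (D N : ℕ) (hN : 0 < N)
    (ρ w : ℝ → ℝ) (hρ : ∀ t : ℝ, 0 < t → HasDerivAt ρ (w t) t)
    (x : Fin N → Fin D → ℝ) (hx : ∀ i, x i ≠ 0)
    (F : Matrix (Fin D) (Fin D) ℝ → ℝ)
    (hF : ∀ S : Matrix (Fin D) (Fin D) ℝ,
      F S = (1 / (2 * (N : ℝ))) * ∑ i, ρ (x i ⬝ᵥ S⁻¹.mulVec (x i)) +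
        (1 / 2) * Real.log S.det)
    (S : Matrix (Fin D) (Fin D) ℝ) (hS : S.PosDef)
    (hmin : IsLocalMinOn F {A : Matrix (Fin D) (Fin D) ℝ | A.PosDef} S) :
    (1 / (N : ℝ)) • ∑ i, w (x i ⬝ᵥ S⁻¹.mulVec (x i)) • vecMulVec (x i) (x i) = S := by
  haveI : CompleteSpace (Matrix (Fin D) (Fin D) ℝ) := FiniteDimensional.complete ℝ _
  have hn : (N : ℝ) ≠ 0 := Nat.cast_ne_zero.mpr hN.ne'
  set K := S⁻¹ with hKdef
  set q : Fin N → ℝ := fun i => x i ⬝ᵥ K *ᵥ x i with hq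
  set A : Matrix (Fin D) (Fin D) ℝ := ∑ i, w (q i) • vecMulVec (x i) (x i) with hA
  set C : Matrix (Fin D) (Fin D) ℝ := (1 / (N:ℝ)) • (K * A * K) - K with hC
  have hdet : S.det ≠ 0 := hS.det_pos.ne'
  have hdetu : IsUnit S.det := isUnit_iff_ne_zero.mpr hdet
  have hSK : S * K = 1 := Matrix.mul_nonsing_inv S hdetu
  have hKS : K * S = 1 := Matrix.nonsing_inv_mul S hdetu
  -- symmetry facts
  have hSt : Sᵀ = S := by
    have := hS.1
    rwa [Matrix.IsHermitian, conjTranspose_eq_transpose_of_trivial] at this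
  have hKt : Kᵀ = K := by
    rw [hKdef, Matrix.transpose_nonsing_inv, hSt]
  have hAt : Aᵀ = A := by
    rw [hA, Matrix.transpose_sum]
    refine Finset.sum_congr rfl fun i _ => ?_
    rw [Matrix.transpose_smul]
    congr 1
    ext a b
    simp [Matrix.vecMulVec_apply, mul_comm]
  have hCt : Cᵀ = C := by
    rw [hC, Matrix.transpose_sub, Matrix.transpose_smul, Matrix.transpose_mul,
      Matrix.transpose_mul, hKt, hAt]
    rw [mul_assoc]
  have hCherm : C.IsHermitian := by
    rwa [Matrix.IsHermitian, conjTranspose_eq_transpose_of_trivial]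
  -- positivity of the q i
  have hqpos : ∀ i, 0 < q i := by
    intro i
    simpa [hq, star_trivial] using hS.inv.dotProduct_mulVec_pos (hx i)
  have h0 : S + (0:ℝ) • C = S := by simp
  -- derivative of the matrix curve and its inverse
  have hφ : HasDerivAt (fun t : ℝ => S + t • C) C 0 := by
    have h := ((hasDerivAt_id (0:ℝ)).smul_const C).const_add S; rw [one_smul] at h; exact h
  have hu := hS.isUnit
  have hcoe : (hu.unit : Matrix (Fin D) (Fin D) ℝ) = S + (0:ℝ) • C := by
    simp [hu.unit_spec]
  have hψ : HasDerivAt (fun t : ℝ => (S + t • C)⁻¹) (-(K * C * K)) 0 := by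
    have h1 := (hcoe ▸ hasFDerivAt_ringInverse (𝕜 := ℝ) hu.unit).comp_hasDerivAt 0 hφ
    have e : (fun t : ℝ => (S + t • C)⁻¹) = fun t : ℝ => Ring.inverse (S + t • C) := by
      funext t; rw [Matrix.nonsing_inv_eq_ringInverse]
    rw [e]
    convert h1 using 1
    case e'_9 => simp [Matrix.coe_units_inv, hu.unit_spec, hKdef, mul_assoc]
    all_goals rfl
  -- derivative of each quadratic-form term
  have hℓ : ∀ i : Fin N, HasDerivAt (fun t : ℝ => x i ⬝ᵥ (S + t • C)⁻¹ *ᵥ x i)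
      (x i ⬝ᵥ (-(K * C * K)) *ᵥ x i) 0 := by
    intro i
    let ℓ : Matrix (Fin D) (Fin D) ℝ →ₗ[ℝ] ℝ :=
      { toFun := fun M => x i ⬝ᵥ M *ᵥ x i
        map_add' := fun M₁ M₂ => by
          show x i ⬝ᵥ (M₁ + M₂) *ᵥ x i = x i ⬝ᵥ M₁ *ᵥ x i + x i ⬝ᵥ M₂ *ᵥ x i
          rw [Matrix.add_mulVec, dotProduct_add]
        map_smul' := fun a M => by
          show x i ⬝ᵥ (a • M) *ᵥ x i = a * (x i ⬝ᵥ M *ᵥ x i)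
          rw [Matrix.smul_mulVec, dotProduct_smul, smul_eq_mul] }
    exact (ℓ.toContinuousLinearMap.hasFDerivAt (x := (S + (0:ℝ) • C)⁻¹)).comp_hasDerivAt 0 hψ
  -- derivative of each ρ-term
  have hρi : ∀ i : Fin N, HasDerivAt (fun t : ℝ => ρ (x i ⬝ᵥ (S + t • C)⁻¹ *ᵥ x i))
      (w (q i) * (x i ⬝ᵥ (-(K * C * K)) *ᵥ x i)) 0 := by
    intro i
    have hpt : x i ⬝ᵥ (S + (0:ℝ) • C)⁻¹ *ᵥ x i = q i := by rw [h0]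
    exact HasDerivAt.comp (x := (0:ℝ)) (hpt ▸ hρ (q i) (hqpos i)) (hℓ i)
  -- derivative of the log-det term
  have hδ : HasDerivAt (fun t : ℝ => (S + t • C).det) (S.det * (K * C).trace) 0 := by
    have h1 := aux_hasDerivAt_det_line S C
    have hadj : S.adjugate = S.det • K := by
      have h2 : K = (S.det)⁻¹ • S.adjugate := by
        rw [hKdef, Matrix.inv_def, Ring.inverse_eq_inv']
      rw [h2, smul_smul, mul_inv_cancel₀ hdet, one_smul]
    rwa [hadj, Matrix.smul_mul, Matrix.trace_smul, smul_eq_mul] at h1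
  have hlog : HasDerivAt (fun t : ℝ => Real.log ((S + t • C).det))
      ((S.det)⁻¹ * (S.det * (K * C).trace)) 0 := by
    have hptdet : (S + (0:ℝ) • C).det ≠ 0 := by rw [h0]; exact hdet
    have hlog' := HasDerivAt.comp (x := (0:ℝ))
      (Real.hasDerivAt_log (show (S + (0:ℝ) • C).det ≠ 0 by rw [h0]; exact hdet)) hδ
    rw [h0] at hlog'
    exact hlog'
  -- total derivative
  set dval : ℝ := 1 / (2 * (N:ℝ)) * ∑ i, w (q i) * (x i ⬝ᵥ (-(K * C * K)) *ᵥ x i) +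
      1 / 2 * ((S.det)⁻¹ * (S.det * (K * C).trace)) with hdval
  have hG : HasDerivAt (fun t : ℝ => F (S + t • C)) dval 0 := by
    have h1 : HasDerivAt (fun t : ℝ =>
        1 / (2 * (N:ℝ)) * ∑ i, ρ (x i ⬝ᵥ (S + t • C)⁻¹ *ᵥ x i) +
        1 / 2 * Real.log ((S + t • C).det)) dval 0 :=
      ((HasDerivAt.fun_sum (fun i _ => hρi i)).const_mul _).add (hlog.const_mul _)
    have e : (fun t : ℝ => F (S + t • C)) = fun t : ℝ =>
        1 / (2 * (N:ℝ)) * ∑ i, ρ (x i ⬝ᵥ (S + t • C)⁻¹ *ᵥ x i) +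
        1 / 2 * Real.log ((S + t • C).det) := by
      funext t; rw [hF]
    rw [e]
    exact h1
  -- local minimality along the line
  have hmem : ∀ᶠ t : ℝ in 𝓝 0, (S + t • C).PosDef := aux_eventually_posDef_line hS hCherm
  have htend : Tendsto (fun t : ℝ => S + t • C) (𝓝 0) (𝓝 S) := by
    have hcont : Continuous fun t : ℝ => S + t • C := by fun_prop
    have := hcont.continuousAt (x := (0:ℝ))
    rwa [ContinuousAt, h0] at this
  have htendW : Tendsto (fun t : ℝ => S + t • C) (𝓝 0)
      (𝓝[{A : Matrix (Fin D) (Fin D) ℝ | A.PosDef}] S) :=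
    tendsto_nhdsWithin_iff.mpr ⟨htend, hmem⟩
  have hlocmin : IsLocalMin (fun t : ℝ => F (S + t • C)) 0 := by
    have h1 : ∀ᶠ t : ℝ in 𝓝 0, F S ≤ F (S + t • C) := htendW.eventually hmin
    refine h1.mono fun t ht => ?_
    show F (S + (0:ℝ) • C) ≤ F (S + t • C)
    rwa [h0]
  have hzero : dval = 0 := hlocmin.hasDerivAt_eq_zero hG
  -- turn the first-order condition into a trace identity
  have hdot : ∀ i, x i ⬝ᵥ (-(K * C * K)) *ᵥ x i = -((K * C * K) * vecMulVec (x i) (x i)).trace := by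
    intro i
    rw [Matrix.neg_mulVec, dotProduct_neg, aux_dot_eq_trace]
  have hsumtr : ∑ i, w (q i) * (x i ⬝ᵥ (-(K * C * K)) *ᵥ x i)
      = -((K * C * K) * A).trace := by
    have h1 : (K * C * K) * A = ∑ i, w (q i) • ((K * C * K) * vecMulVec (x i) (x i)) := by
      rw [hA, Matrix.mul_sum]
      exact Finset.sum_congr rfl fun i _ => Matrix.mul_smul _ _ _
    rw [h1, Matrix.trace_sum, ← Finset.sum_neg_distrib]
    refine Finset.sum_congr rfl fun i _ => ?_
    rw [hdot, Matrix.trace_smul, smul_eq_mul, neg_mul_eq_mul_neg]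
  have hcyc : ((K * C * K) * A).trace = ((K * A * K) * C).trace := by
    have e1 : (K * C * K) * A = (K * C) * (K * A) := by rw [mul_assoc]
    have e2 : (K * A * K) * C = (K * A) * (K * C) := by rw [mul_assoc]
    rw [e1, e2, Matrix.trace_mul_comm]
  -- derive trace (C * C) = 0
  have htrCC : (C * C).trace = 0 := by
    have e1 : C * C = (1 / (N:ℝ)) • ((K * A * K) * C) - K * C := by
      rw [hC, Matrix.sub_mul, Matrix.smul_mul]
    have heq : 1 / (2 * (N:ℝ)) * (-((K * A * K) * C).trace) + 1 / 2 * ((K * C).trace) = 0 := by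
      have := hzero
      rw [hdval, hsumtr, hcyc] at this
      rw [← this]
      congr 1
      rw [inv_mul_cancel_left₀ hdet]
    rw [e1, Matrix.trace_sub, Matrix.trace_smul, smul_eq_mul]
    have h2 : (1 / (N:ℝ)) * ((K * A * K) * C).trace = (K * C).trace := by
      field_simp at heq ⊢
      linarith
    rw [h2, sub_self]
  -- trace (C * C) is a sum of squares, so C = 0
  have hCC : (C * C).trace = ∑ i, ∑ j, (C i j)^2 := by
    simp only [Matrix.trace, Matrix.diag_apply, Matrix.mul_apply]
    refine Finset.sum_congr rfl fun i _ => Finset.sum_congr rfl fun j _ => ?_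
    have : C j i = C i j := by
      conv_lhs => rw [← hCt]
      rfl
    rw [this, sq]
  have hC0 : C = 0 := by
    have h1 : ∑ i, ∑ j, (C i j)^2 = 0 := by rw [← hCC, htrCC]
    ext i j
    have h2 := (Finset.sum_eq_zero_iff_of_nonneg
      (fun a _ => Finset.sum_nonneg fun b _ => sq_nonneg (C a b))).mp h1 i (Finset.mem_univ i)
    have h3 := (Finset.sum_eq_zero_iff_of_nonneg
      (fun b _ => sq_nonneg (C i b))).mp h2 j (Finset.mem_univ j)
    have := pow_eq_zero_iff (n := 2) (by norm_num) |>.mp h3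
    simpa using this
  -- conclude
  have hfix : (1 / (N:ℝ)) • (K * A * K) = K := sub_eq_zero.mp hC0
  have hgoal : (1 / (N:ℝ)) • A = S := by
    have e1 : S * ((1 / (N:ℝ)) • (K * A * K)) * S = (1 / (N:ℝ)) • (S * (K * A * K) * S) := by
      rw [Matrix.mul_smul, Matrix.smul_mul]
    have e2 : S * (K * A * K) * S = (S * K) * A * (K * S) := by
      simp only [mul_assoc]
    have e3 : S * ((1 / (N:ℝ)) • (K * A * K)) * S = S * K * S := by rw [hfix]
    rw [e1, e2, hSK, hKS, one_mul, mul_one] at e3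
    rw [e3, one_mul]
  exact hgoal
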